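/- For all integers k, ℓ ≥ 1: Σ_{m ∈ ℤ} (−1)^m q_{k+m}^{[k−1]}(x|b) · q_{ℓ−m}^{[ℓ−1]}(x|b) = 0 (a finite sum, since q_j^{[·]} = 0 for j < 0). Equivalently, the two-entry Schur–Pfaffians satisfy Pf[q_k^{[k−1]} q_ℓ^{[ℓ−1]}] + Pf[q_ℓ^{[ℓ−1]} q_k^{[k−1]}] = 0. The identity holds for every number of x-variables. -/

import Mathlib

open Finset

noncomputable section

variable {R : Type*} [CommRing R]

/-- The formal power series `1/(1 - x·u)`. -/
def geomSeries (x : R) : PowerSeries R := PowerSeries.mk fun m => x ^ m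

/-- `e_u^{[k]}(c)`: the power series `∏_{i=1}^k (1 + c_i u)` for `k ≥ 0`, and
`∏_{i=1}^{-k} (1 - c_i u)⁻¹` for `k < 0`.  The sequence `c` is read at indices `1, 2, …`. -/
def eSer (k : ℤ) (c : ℕ → R) : PowerSeries R :=
  if 0 ≤ k then ∏ i ∈ Finset.range k.toNat, (1 + PowerSeries.C (c (i + 1)) * PowerSeries.X)
  else ∏ i ∈ Finset.range (-k).toNat, geomSeries (c (i + 1))

/-- `q_u(x) = ∏_{i=1}^n (1 + x_i u)/(1 - x_i u)`, with `n` x-variables. -/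
def qSer (n : ℕ) (x : ℕ → R) : PowerSeries R :=
  ∏ i ∈ Finset.range n,
    ((1 + PowerSeries.C (x (i + 1)) * PowerSeries.X) * geomSeries (x (i + 1)))

/-- The coefficient of `u^m` (`m : ℤ`) of a power series; zero when `m < 0`. -/
def coeffZ (m : ℤ) (φ : PowerSeries R) : R :=
  if 0 ≤ m then PowerSeries.coeff m.toNat φ else 0

/-- `q_m^{[ℓ]}(x|c)`: the coefficient of `u^m` in `q_u(x)·e_u^{[ℓ]}(c)`. -/
def qC (m ℓ : ℤ) (n : ℕ) (x c : ℕ → R) : R := coeffZ m (qSer n x * eSer ℓ c)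

/-- `q_m^{[k|ℓ]}(x;z|c)`: the coefficient of `u^m` in `q_u(x)·e_u^{[k]}(z)·e_u^{[ℓ]}(c)`. -/
def qC2 (m k ℓ : ℤ) (n : ℕ) (x z c : ℕ → R) : R :=
  coeffZ m (qSer n x * eSer k z * eSer ℓ c)

/-- `e_m^{[k]}(c)`. -/
def eC (m k : ℤ) (c : ℕ → R) : R := coeffZ m (eSer k c)

/-- `e_m^{[k|ℓ]}(z|c)`: the coefficient of `u^m` in `e_u^{[k]}(z)·e_u^{[ℓ]}(c)`. -/
def eC2 (m k ℓ : ℤ) (z c : ℕ → R) : R := coeffZ m (eSer k z * eSer ℓ c)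

/-- Extension of `b` to all integer indices using the convention `b_{-i} = -b_{i+1}` for
`i ≥ 0`; positive indices are untouched.  This also implements the `⋆` substitution. -/
def bext (b : ℤ → R) : ℤ → R := fun j => if 0 < j then b j else -b (1 - j)

/-- `ε(0) = 1` and `ε(m) = 2·(-1)^m` for `m ≥ 1`. -/
def pfEps (m : ℕ) : ℤ := if m = 0 then 1 else 2 * (-1) ^ m

/-- The subscript `α_i + Σ_{j>i} m_{ij} − Σ_{j<i} m_{ji}` in the Schur–Pfaffian. -/
def pfIdx {r : ℕ} (α : Fin r → ℤ) (m : Fin r → Fin r → ℕ) (i : Fin r) : ℤ :=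
  α i + ∑ j, (if i < j then (m i j : ℤ) else 0) - ∑ j, (if j < i then (m j i : ℤ) else 0)

/-- The Schur–Pfaffian `Pf[c^{(1)}_{α_1} ⋯ c^{(r)}_{α_r}]`, as the (finitely supported) sum
over tuples of nonnegative integers `(m_{ij})_{1 ≤ i < j ≤ r}`. -/
def schurPf {r : ℕ} (c : Fin r → ℤ → R) (α : Fin r → ℤ) : R :=
  ∑ᶠ m ∈ {m : Fin r → Fin r → ℕ | ∀ i j, ¬ i < j → m i j = 0},
    (∏ i, ∏ j, if i < j then (pfEps (m i j) : R) else 1) * ∏ i, c i (pfIdx α m i)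

/-- The alphabet of primed, unmarked and circled numbers. -/
inductive MSTEntry where
  | prime : ℕ → MSTEntry
  | unmarked : ℕ → MSTEntry
  | circ : ℕ → MSTEntry
deriving DecidableEq

namespace MSTEntry

/-- Whether an entry is circled (`1`) or not (`0`). -/
def isCirc : MSTEntry → ℕ
  | circ _ => 1
  | _ => 0

/-- Key realizing the order `1' < 1 < 2' < 2 < ⋯` within each class. -/
def key : MSTEntry → ℕ
  | prime k => 2 * k - 1
  | unmarked k => 2 * k
  | circ k => k

/-- The numeric value of an entry. -/
def val : MSTEntry → ℕ
  | prime k => k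
  | unmarked k => k
  | circ k => k

/-- The total order `1' < 1 < 2' < 2 < ⋯ < 1° < 2° < ⋯` on entries of positive value. -/
def le (a b : MSTEntry) : Prop :=
  a.isCirc < b.isCirc ∨ (a.isCirc = b.isCirc ∧ a.key ≤ b.key)

end MSTEntry

/-- The shifted Young diagram of a strict partition `λ` of length `r`:
boxes `(i, j)` with `1 ≤ i ≤ r` and `i ≤ j ≤ λ_i + i - 1` (rows and columns 1-indexed). -/
def shiftedDiag (r : ℕ) (lam : ℕ → ℕ) : Set (ℕ × ℕ) :=
  {p | 1 ≤ p.1 ∧ p.1 ≤ r ∧ p.1 ≤ p.2 ∧ p.2 ≤ lam p.1 + p.1 - 1}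

/-- `T` is a marked shifted tableau of the flagged strict partition `(λ, f)` whose unmarked
and primed entries have numeric value at most `n` (normalized to `unmarked 0` off the
diagram). -/
def IsMST (n r : ℕ) (lam f : ℕ → ℕ) (T : ℕ × ℕ → MSTEntry) : Prop :=
  (∀ p, p ∉ shiftedDiag r lam → T p = .unmarked 0) ∧
  (∀ p ∈ shiftedDiag r lam, 1 ≤ (T p).val) ∧
  (∀ i j j', (i, j) ∈ shiftedDiag r lam → (i, j') ∈ shiftedDiag r lam → j ≤ j' →
    (T (i, j)).le (T (i, j'))) ∧
  (∀ i i' j, (i, j) ∈ shiftedDiag r lam → (i', j) ∈ shiftedDiag r lam → i ≤ i' →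
    (T (i, j)).le (T (i', j))) ∧
  (∀ i i' j k k', (i, j) ∈ shiftedDiag r lam → (i', j) ∈ shiftedDiag r lam → i < i' →
    T (i, j) = .unmarked k → T (i', j) = .unmarked k' → k < k') ∧
  (∀ i j j' k k', (i, j) ∈ shiftedDiag r lam → (i, j') ∈ shiftedDiag r lam → j < j' →
    T (i, j) = .prime k → T (i, j') = .prime k' → k < k') ∧
  (∀ i j j' k k', (i, j) ∈ shiftedDiag r lam → (i, j') ∈ shiftedDiag r lam → j < j' →
    T (i, j) = .circ k → T (i, j') = .circ k' → k < k') ∧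
  (∀ p ∈ shiftedDiag r lam, (T p).le (.circ (f p.1))) ∧
  (∀ p ∈ shiftedDiag r lam, ∀ k, (T p = .unmarked k ∨ T p = .prime k) → k ≤ n)

/-- The factor of the weight `(xz|b)^T` contributed by the entry at box `p`.  The convention
`b_{-i} = -b_{i+1}` is implemented by `bext`. -/
def mstFactor (x z : ℕ → R) (b : ℤ → R) (p : ℕ × ℕ) : MSTEntry → R
  | .unmarked k => x k + bext b ((p.2 : ℤ) - (p.1 : ℤ))
  | .prime k => x k - bext b ((p.2 : ℤ) - (p.1 : ℤ))
  | .circ k => z k + bext b ((k : ℤ) + (p.1 : ℤ) - (p.2 : ℤ))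

/-- The weight `(xz|b)^T` of a marked shifted tableau. -/
def mstWeight (r : ℕ) (lam : ℕ → ℕ) (x z : ℕ → R) (b : ℤ → R) (T : ℕ × ℕ → MSTEntry) : R :=
  ∏ i ∈ Finset.range r, ∏ j ∈ Finset.range (lam (i + 1)),
    mstFactor x z b (i + 1, i + 1 + j) (T (i + 1, i + 1 + j))

/-- The flagged factorial Q-function `Q_{λ,f}(x;z|b)`, with `n` x-variables. -/
def Qflag (n r : ℕ) (lam f : ℕ → ℕ) (x z : ℕ → R) (b : ℤ → R) : R :=
  ∑ᶠ T ∈ {T : ℕ × ℕ → MSTEntry | IsMST n r lam f T}, mstWeight r lam x z b T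

/-- Ivanov's factorial Q-function `Q_λ(x|b)`: the case of the zero flag (no circled
entries, so the z-variables do not occur). -/
def QIvanov (n r : ℕ) (lam : ℕ → ℕ) (x : ℕ → R) (b : ℤ → R) : R :=
  Qflag n r lam (fun _ => 0) x (fun _ => 0) b

/-- The skew Young diagram `κ/ν`: boxes `(i, j)` with `1 ≤ i ≤ r`, `ν_i < j ≤ κ_i`. -/
def skewDiag (r : ℕ) (kap nu : ℕ → ℕ) : Set (ℕ × ℕ) :=
  {p | 1 ≤ p.1 ∧ p.1 ≤ r ∧ nu p.1 < p.2 ∧ p.2 ≤ kap p.1}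

/-- `t` is a row-strict flagged tableau of `(κ/ν, f)` (normalized to `0` off the diagram). -/
def IsRST (r : ℕ) (kap nu f : ℕ → ℕ) (t : ℕ × ℕ → ℕ) : Prop :=
  (∀ p, p ∉ skewDiag r kap nu → t p = 0) ∧
  (∀ p ∈ skewDiag r kap nu, 1 ≤ t p) ∧
  (∀ i j j', (i, j) ∈ skewDiag r kap nu → (i, j') ∈ skewDiag r kap nu → j < j' →
    t (i, j) < t (i, j')) ∧
  (∀ i i' j, (i, j) ∈ skewDiag r kap nu → (i', j) ∈ skewDiag r kap nu → i ≤ i' →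
    t (i, j) ≤ t (i', j)) ∧
  (∀ p ∈ skewDiag r kap nu, t p ≤ f p.1)

/-- The weight `∏_{e ∈ T} (z_{|e|} + b_{|e| + r(e) - c(e)})` of a row-strict flagged tableau. -/
def rstWeight (r : ℕ) (kap nu : ℕ → ℕ) (z : ℕ → R) (b : ℤ → R) (t : ℕ × ℕ → ℕ) : R :=
  ∏ i ∈ Finset.range r, ∏ j ∈ Finset.range (kap (i + 1) - nu (i + 1)),
    (z (t (i + 1, nu (i + 1) + 1 + j)) +
      b ((t (i + 1, nu (i + 1) + 1 + j) : ℤ) + ((i : ℤ) + 1) - ((nu (i + 1) : ℤ) + 1 + (j : ℤ))))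

/-- The row-strict flagged skew factorial Schur polynomial `s̃_{κ/ν,f}(z|b)`. -/
def sTilde (r : ℕ) (kap nu f : ℕ → ℕ) (z : ℕ → R) (b : ℤ → R) : R :=
  ∑ᶠ t ∈ {t : ℕ × ℕ → ℕ | IsRST r kap nu f t}, rstWeight r kap nu z b t



section Aux

lemma one_sub_mul_geom (x : R) :
    (1 - PowerSeries.C x * PowerSeries.X) * geomSeries x = 1 := by
  ext n
  rw [sub_mul, one_mul, map_sub, mul_assoc]
  cases n with
  | zero => simp [geomSeries]
  | succ n =>
    rw [PowerSeries.coeff_C_mul, PowerSeries.coeff_succ_X_mul]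
    simp [geomSeries, pow_succ, mul_comm, PowerSeries.coeff_one]

lemma one_add_mul_geom_neg (x : R) :
    (1 + PowerSeries.C x * PowerSeries.X) * geomSeries (-x) = 1 := by
  have := one_sub_mul_geom (-x) (R := R)
  simpa [map_neg, sub_neg_eq_add] using this

lemma rescale_geom (a x : R) :
    PowerSeries.rescale a (geomSeries x) = geomSeries (a * x) := by
  ext n; simp [geomSeries, PowerSeries.coeff_rescale, mul_pow]

lemma rescale_C' (a x : R) :
    PowerSeries.rescale a (PowerSeries.C x) = PowerSeries.C x := by
  ext n
  simp only [PowerSeries.coeff_rescale, PowerSeries.coeff_C]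
  split_ifs with h <;> simp [h]

lemma rescale_one_add (a x : R) :
    PowerSeries.rescale a (1 + PowerSeries.C x * PowerSeries.X)
      = 1 + PowerSeries.C (a * x) * PowerSeries.X := by
  rw [map_add, map_one, map_mul, rescale_C', PowerSeries.rescale_X, map_mul]
  ring

lemma rescale_qSer_mul (n : ℕ) (x : ℕ → R) :
    PowerSeries.rescale (-1) (qSer n x) * qSer n x = 1 := by
  rw [qSer, map_prod, ← Finset.prod_mul_distrib]
  refine Finset.prod_eq_one fun i _ => ?_
  rw [map_mul, rescale_one_add, rescale_geom, neg_one_mul, map_neg]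
  calc (1 + -PowerSeries.C (x (i+1)) * PowerSeries.X) * geomSeries (-x (i+1)) *
        ((1 + PowerSeries.C (x (i+1)) * PowerSeries.X) * geomSeries (x (i+1)))
      = ((1 - PowerSeries.C (x (i+1)) * PowerSeries.X) * geomSeries (x (i+1))) *
        ((1 + PowerSeries.C (x (i+1)) * PowerSeries.X) * geomSeries (-x (i+1))) := by
        ring
    _ = 1 := by rw [one_sub_mul_geom, one_add_mul_geom_neg, one_mul]

/-- The polynomial `∏_{i=1}^m (1 + c_i u)`. -/
def ePoly (m : ℕ) (c : ℕ → R) : Polynomial R :=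
  ∏ i ∈ Finset.range m, (1 + Polynomial.C (c (i + 1)) * Polynomial.X)

lemma eSer_eq_ePoly (m : ℕ) (c : ℕ → R) :
    eSer (m : ℤ) c = ((ePoly m c : Polynomial R) : PowerSeries R) := by
  rw [eSer, if_pos (by positivity), ePoly,
    ← Polynomial.coeToPowerSeries.ringHom_apply, map_prod]
  simp [Polynomial.coeToPowerSeries.ringHom_apply]

lemma rescale_ePoly (m : ℕ) (c : ℕ → R) :
    PowerSeries.rescale (-1) ((ePoly m c : Polynomial R) : PowerSeries R)
      = ((ePoly m (fun i => -c i) : Polynomial R) : PowerSeries R) := by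
  rw [ePoly, ePoly, ← Polynomial.coeToPowerSeries.ringHom_apply,
    ← Polynomial.coeToPowerSeries.ringHom_apply, map_prod, map_prod, map_prod]
  simp only [map_add, map_mul, map_one, Polynomial.coeToPowerSeries.ringHom_apply,
    Polynomial.coe_C, Polynomial.coe_X]
  refine Finset.prod_congr rfl fun i _ => ?_
  rw [rescale_C', PowerSeries.rescale_X, map_neg, map_one, map_neg]
  ring

lemma natDegree_ePoly_le (m : ℕ) (c : ℕ → R) : (ePoly m c).natDegree ≤ m := by
  refine le_trans (Polynomial.natDegree_prod_le _ _) ?_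
  calc ∑ i ∈ Finset.range m, (1 + Polynomial.C (c (i+1)) * Polynomial.X).natDegree
      ≤ ∑ _i ∈ Finset.range m, 1 := by
        refine Finset.sum_le_sum fun i _ => ?_
        compute_degree
    _ = m := by simp

end Aux

/-- For all integers `k, ℓ ≥ 1`:
`Σ_{m ∈ ℤ} (−1)^m q_{k+m}^{[k−1]}(x|b) · q_{ℓ−m}^{[ℓ−1]}(x|b) = 0`
(a finite sum), for every number `n` of x-variables. -/
theorem statement_9 (R : Type*) [CommRing R] (n : ℕ) (x b : ℕ → R)
    (k l : ℤ) (hk : 1 ≤ k) (hl : 1 ≤ l) :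
    ∑ᶠ m : ℤ,
        ((m.negOnePow : ℤ) : R) * (qC (k + m) (k - 1) n x b * qC (l - m) (l - 1) n x b) =
      0 := by
  classical
  set F := qSer n x * eSer (k - 1) b with hF
  set G := qSer n x * eSer (l - 1) b with hG
  set K := (k - 1).toNat with hKdef
  set L := (l - 1).toNat with hLdef
  have hK : (K : ℤ) = k - 1 := Int.toNat_of_nonneg (by omega)
  have hL : (L : ℤ) = l - 1 := Int.toNat_of_nonneg (by omega)
  set N := K + L + 2 with hNdef
  have hN : (N : ℤ) = k + l := by push_cast; omega
  have hqzero : ∀ (m j : ℤ), m < 0 → qC m j n x b = 0 := by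
    intro m j hm
    rw [qC, coeffZ, if_neg (by omega)]
  have hsupp : (Function.support fun m : ℤ =>
      ((m.negOnePow : ℤ) : R) * (qC (k + m) (k - 1) n x b * qC (l - m) (l - 1) n x b))
      ⊆ ↑(Finset.Icc (-k) l) := by
    intro m hm
    simp only [Function.mem_support] at hm
    simp only [Finset.coe_Icc, Set.mem_Icc]
    constructor
    · by_contra h
      exact hm (by rw [hqzero (k + m) _ (by omega)]; ring)
    · by_contra h
      exact hm (by rw [hqzero (l - m) _ (by omega)]; ring)
  rw [finsum_eq_sum_of_support_subset _ hsupp]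
  have hstep : ∑ m ∈ Finset.Icc (-k) l,
      ((m.negOnePow : ℤ) : R) * (qC (k + m) (k - 1) n x b * qC (l - m) (l - 1) n x b)
    = ∑ j ∈ Finset.range (N + 1),
      ((k.negOnePow : ℤ) : R) *
        ((-1 : R) ^ j * (PowerSeries.coeff j F * PowerSeries.coeff (N - j) G)) := by
    refine Finset.sum_nbij' (fun m => (m + k).toNat) (fun j => (j : ℤ) - k) ?_ ?_ ?_ ?_ ?_
    · intro m hm; simp only [Finset.mem_Icc] at hm; simp only [Finset.mem_range]; omega
    · intro j hj; simp only [Finset.mem_range] at hj; simp only [Finset.mem_Icc]; omega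
    · intro m hm; simp only [Finset.mem_Icc] at hm
      show ((((m + k).toNat : ℤ)) - k) = m; omega
    · intro j hj; simp only [Finset.mem_range] at hj
      show ((((j : ℤ) - k) + k).toNat) = j; omega
    · intro m hm
      simp only [Finset.mem_Icc] at hm
      have e1 : qC (k + m) (k - 1) n x b = PowerSeries.coeff ((m + k).toNat) F := by
        have h' : (k + m).toNat = (m + k).toNat := by omega
        rw [qC, coeffZ, if_pos (by omega), h', hF]
      have e2 : qC (l - m) (l - 1) n x b
          = PowerSeries.coeff (N - (m + k).toNat) G := by
        have h' : (l - m).toNat = N - (m + k).toNat := by omega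
        rw [qC, coeffZ, if_pos (by omega), h', hG]
      have e3 : ((m.negOnePow : ℤ) : R)
          = ((k.negOnePow : ℤ) : R) * (-1 : R) ^ ((m + k).toNat) := by
        have hm' : m.negOnePow = ((((m + k).toNat : ℤ)) - k).negOnePow := by
          congr 1; omega
        rw [hm', Int.negOnePow_sub, Units.val_mul, Int.cast_mul,
          Int.coe_negOnePow_natCast]
        push_cast
        ring
      rw [e1, e2, e3]
      ring
  rw [hstep, ← Finset.mul_sum]
  have key : ∑ j ∈ Finset.range (N + 1),
      (-1 : R) ^ j * (PowerSeries.coeff j F * PowerSeries.coeff (N - j) G)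
      = PowerSeries.coeff N (PowerSeries.rescale (-1) F * G) := by
    rw [PowerSeries.coeff_mul, Finset.Nat.sum_antidiagonal_eq_sum_range_succ_mk]
    exact Finset.sum_congr rfl fun j hj => by rw [PowerSeries.coeff_rescale]; ring
  rw [key]
  have hFG : PowerSeries.rescale (-1) F * G
      = ((ePoly K (fun i => -b i) * ePoly L b : Polynomial R) : PowerSeries R) := by
    have hk1 : k - 1 = (K : ℤ) := hK.symm
    have hl1 : l - 1 = (L : ℤ) := hL.symm
    rw [hF, hG, hk1, hl1, eSer_eq_ePoly, eSer_eq_ePoly, map_mul, Polynomial.coe_mul]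
    calc PowerSeries.rescale (-1) (qSer n x) *
          PowerSeries.rescale (-1) ((ePoly K b : Polynomial R) : PowerSeries R) *
          (qSer n x * ((ePoly L b : Polynomial R) : PowerSeries R))
        = (PowerSeries.rescale (-1) (qSer n x) * qSer n x) *
          (PowerSeries.rescale (-1) ((ePoly K b : Polynomial R) : PowerSeries R) *
            ((ePoly L b : Polynomial R) : PowerSeries R)) := by ring
      _ = _ := by rw [rescale_qSer_mul, one_mul, rescale_ePoly]
  rw [hFG, Polynomial.coeff_coe,
    Polynomial.coeff_eq_zero_of_natDegree_lt ?_, mul_zero]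
  calc (ePoly K (fun i => -b i) * ePoly L b).natDegree
      ≤ (ePoly K fun i => -b i).natDegree + (ePoly L b).natDegree :=
        Polynomial.natDegree_mul_le
    _ ≤ K + L := add_le_add (natDegree_ePoly_le _ _) (natDegree_ePoly_le _ _)
    _ < N := by omega
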